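/- For every d ≥ 2, every n > d, and every integer l ≥ 2(n−d), there exists an arrangement of n codimension-one subtori in the flat d-dimensional torus T^d whose complement has exactly l connected components. -/

import Mathlib

/-- The flat `d`-dimensional torus `ℝ^d / ℤ^d`. -/
abbrev Torus (d : ℕ) : Type := Fin d → AddCircle (1 : ℝ)

/-- The quotient map `ℝ^d → ℝ^d/ℤ^d`. -/
noncomputable def torusQuot (d : ℕ) : (Fin d → ℝ) → Torus d := fun x i => (x i : AddCircle (1 : ℝ))

/-- A codimension-one subtorus of the flat torus: the image of an affine hyperplane
`∑ aᵢ xᵢ = c` with rational coefficients `a ≠ 0`. -/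
def IsCodimOneSubtorus {d : ℕ} (S : Set (Torus d)) : Prop :=
  ∃ (a : Fin d → ℚ) (c : ℝ), a ≠ 0 ∧
    S = torusQuot d '' {x : Fin d → ℝ | ∑ i, (a i : ℝ) * x i = c}

/-- The number of connected components of the complement of `A` in the torus. -/
noncomputable def torusRegions {d : ℕ} (A : Set (Torus d)) : ℕ :=
  Nat.card (ConnectedComponents ↥(Aᶜ))

/-- `F(T^d, n)`: the set of possible numbers of connected components of complements
of unions of `n` distinct codimension-one subtori of the flat `d`-torus. -/
def FTorus (d n : ℕ) : Set ℕ :=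
  {f | ∃ 𝒜 : Finset (Set (Torus d)), 𝒜.card = n ∧ (∀ S ∈ 𝒜, IsCodimOneSubtorus S) ∧
        f = torusRegions (⋃ S ∈ 𝒜, S)}

open Set

lemma circ_eq_iff (x y : ℝ) : (x : AddCircle (1:ℝ)) = (y : AddCircle (1:ℝ)) ↔ ∃ z : ℤ, y = x + z := by
  rw [QuotientAddGroup.eq]
  constructor
  · intro h
    obtain ⟨z, hz⟩ := AddSubgroup.mem_zmultiples_iff.mp h
    exact ⟨z, by rw [zsmul_eq_mul, mul_one] at hz; linarith⟩
  · rintro ⟨z, rfl⟩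
    exact AddSubgroup.mem_zmultiples_iff.mpr ⟨z, by rw [zsmul_eq_mul, mul_one]; ring⟩

lemma torusQuot_eq_iff (d : ℕ) (x y : Fin d → ℝ) :
    torusQuot d x = torusQuot d y ↔ ∀ i, ∃ z : ℤ, y i = x i + z := by
  constructor
  · intro h i; exact (circ_eq_iff _ _).mp (congrFun h i)
  · intro h; funext i; exact (circ_eq_iff _ _).mpr (h i)

lemma isOpenQuotientMap_torusQuot (d : ℕ) : IsOpenQuotientMap (torusQuot d) :=
  IsOpenQuotientMap.piMap fun _ => QuotientAddGroup.isOpenQuotientMap_mk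

noncomputable def lineSet (d : ℕ) (a : Fin d → ℤ) (c : ℝ) : Set (Torus d) :=
  torusQuot d '' {x | ∑ i, (a i : ℝ) * x i = c}

lemma mem_lineSet {d : ℕ} (a : Fin d → ℤ) (i₀ : Fin d) (ha : a i₀ = 1) (c : ℝ)
    (x : Fin d → ℝ) :
    torusQuot d x ∈ lineSet d a c ↔ ∃ z : ℤ, ∑ i, (a i : ℝ) * x i = c + z := by
  constructor
  · rintro ⟨y, hy, hxy⟩
    rw [torusQuot_eq_iff] at hxy
    choose z hz using hxy
    refine ⟨∑ i, a i * z i, ?_⟩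
    have : ∀ i, (a i : ℝ) * x i = (a i : ℝ) * y i + (a i : ℝ) * (z i : ℝ) := by
      intro i; rw [hz i]; ring
    rw [Finset.sum_congr rfl fun i _ => this i, Finset.sum_add_distrib, hy]
    push_cast
    ring
  · rintro ⟨z, hz⟩
    refine ⟨Function.update x i₀ (x i₀ - z), ?_, ?_⟩
    · have key : ∀ i, (a i : ℝ) * Function.update x i₀ (x i₀ - (z:ℝ)) i
          = (a i : ℝ) * x i - (if i = i₀ then (z:ℝ) else 0) := by
        intro i
        by_cases h : i = i₀
        · subst h; rw [Function.update_self, if_pos rfl, ha]; push_cast; ring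
        · rw [Function.update_of_ne h, if_neg h]; ring
      simp only [mem_setOf_eq]
      rw [Finset.sum_congr rfl fun i _ => key i, Finset.sum_sub_distrib,
        Finset.sum_ite_eq' Finset.univ i₀ (fun _ => (z:ℝ)), if_pos (Finset.mem_univ i₀), hz]
      ring
    · rw [torusQuot_eq_iff]
      intro i
      by_cases h : i = i₀
      · subst h; exact ⟨z, by rw [Function.update_self]; ring⟩
      · exact ⟨0, by rw [Function.update_of_ne h]; push_cast; ring⟩

lemma isCodimOneSubtorus_lineSet {d : ℕ} (a : Fin d → ℤ) (i₀ : Fin d) (ha : a i₀ = 1)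
    (c : ℝ) : ∃ (aq : Fin d → ℚ), aq ≠ 0 ∧
      lineSet d a c = torusQuot d '' {x : Fin d → ℝ | ∑ i, (aq i : ℝ) * x i = c} := by
  refine ⟨fun i => (a i : ℚ), ?_, ?_⟩
  · intro h
    have := congrFun h i₀
    rw [ha] at this
    norm_num at this
  · unfold lineSet
    norm_num

section Construction

/-- spacing of the vertical circles -/
noncomputable def dl (m k : ℕ) : ℝ := 1 / (2*(m:ℝ)*((k:ℝ)+1))

/-- right endpoint of strip `t` -/
noncomputable def gv (m k : ℕ) (t : ℕ) : ℝ := if t = m - 1 then 1 else ((t:ℝ)+1) * dl m k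

/-- number of regions in strip `t` -/
def cnt (m k : ℕ) (t : ℕ) : ℕ := if t = m - 1 then k + 2 else 2

/-- open convex region in `ℝ^d` -/
def Creg (e m k : ℕ) (t : ℕ) (s : ℤ) : Set (Fin (e+2) → ℝ) :=
  {x | ((t:ℝ) * dl m k < x 0 ∧ x 0 < gv m k t) ∧ (0 < x 1 ∧ x 1 < 1) ∧
       ((s:ℝ) + 1/2 < x 1 - (k:ℝ) * x 0 ∧ x 1 - (k:ℝ) * x 0 < (s:ℝ) + 3/2) ∧
       (∀ i : Fin (e+2), 2 ≤ (i:ℕ) → 0 < x i ∧ x i < 1)}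

def aS (e k : ℕ) : Fin (e+2) → ℤ := fun i => if i = 1 then 1 else if i = 0 then -(k:ℤ) else 0

noncomputable def Hsub (e : ℕ) (i : Fin (e+2)) : Set (Torus (e+2)) :=
  lineSet (e+2) (Pi.single i 1) 0

noncomputable def Ssub (e k : ℕ) : Set (Torus (e+2)) := lineSet (e+2) (aS e k) (1/2)

noncomputable def Vsub (e m k : ℕ) (j : ℕ) : Set (Torus (e+2)) :=
  lineSet (e+2) (Pi.single 0 1) ((j:ℝ) * dl m k)

lemma fin_zero_ne_one (e : ℕ) : (0 : Fin (e+2)) ≠ 1 := by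
  simp [Fin.ext_iff]

lemma sum_single (e : ℕ) (i₀ : Fin (e+2)) (x : Fin (e+2) → ℝ) :
    ∑ i, ((Pi.single i₀ 1 : Fin (e+2) → ℤ) i : ℝ) * x i = x i₀ := by
  rw [Finset.sum_eq_single i₀]
  · simp
  · intro b _ hb; simp [Pi.single_eq_of_ne hb]
  · intro h; exact absurd (Finset.mem_univ i₀) h

lemma sum_aS (e k : ℕ) (x : Fin (e+2) → ℝ) :
    ∑ i, ((aS e k) i : ℝ) * x i = x 1 - (k:ℝ) * x 0 := by
  have h01 : (0 : Fin (e+2)) ≠ 1 := fin_zero_ne_one e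
  rw [← Finset.sum_subset (Finset.subset_univ ({0,1} : Finset (Fin (e+2))))
      (fun i _ hi => ?_)]
  · rw [Finset.sum_pair h01]
    simp only [aS, if_neg h01, if_pos rfl, if_pos rfl]
    push_cast; ring
  · simp only [Finset.mem_insert, Finset.mem_singleton, not_or] at hi
    simp [aS, hi.1, hi.2]

lemma mem_Hsub (e : ℕ) (i : Fin (e+2)) (x : Fin (e+2) → ℝ) :
    torusQuot (e+2) x ∈ Hsub e i ↔ ∃ z : ℤ, x i = (z:ℝ) := by
  rw [Hsub, mem_lineSet _ i (by simp) _ x]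
  constructor
  · rintro ⟨z, hz⟩; rw [sum_single] at hz; exact ⟨z, by linarith⟩
  · rintro ⟨z, hz⟩; exact ⟨z, by rw [sum_single]; linarith⟩

lemma mem_Ssub (e k : ℕ) (x : Fin (e+2) → ℝ) :
    torusQuot (e+2) x ∈ Ssub e k ↔ ∃ z : ℤ, x 1 - (k:ℝ) * x 0 = 1/2 + z := by
  rw [Ssub, mem_lineSet _ 1 (by simp [aS]) _ x]
  constructor
  · rintro ⟨z, hz⟩; rw [sum_aS] at hz; exact ⟨z, hz⟩
  · rintro ⟨z, hz⟩; exact ⟨z, by rw [sum_aS]; linarith⟩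

lemma mem_Vsub (e m k : ℕ) (j : ℕ) (x : Fin (e+2) → ℝ) :
    torusQuot (e+2) x ∈ Vsub e m k j ↔ ∃ z : ℤ, x 0 = (j:ℝ) * dl m k + z := by
  rw [Vsub, mem_lineSet _ 0 (by simp) _ x]
  constructor
  · rintro ⟨z, hz⟩; rw [sum_single] at hz; exact ⟨z, hz⟩
  · rintro ⟨z, hz⟩; exact ⟨z, by rw [sum_single]; linarith⟩

end Construction

section Numeric
variable {m k : ℕ}

lemma dl_pos (hm : 0 < m) : 0 < dl m k := by
  unfold dl
  have h1 : (0:ℝ) < (m:ℝ) := by exact_mod_cast hm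
  positivity

lemma k_c_lt_half (hm : 0 < m) {j : ℕ} (hj : j ≤ m) :
    (k:ℝ) * ((j:ℝ) * dl m k) < 1/2 := by
  have h1 : (0:ℝ) < (m:ℝ) := by exact_mod_cast hm
  have hj' : (j:ℝ) ≤ (m:ℝ) := by exact_mod_cast hj
  have hD : (0:ℝ) < 2*(m:ℝ)*((k:ℝ)+1) := by positivity
  rw [dl, show (k:ℝ) * ((j:ℝ) * (1 / (2*(m:ℝ)*((k:ℝ)+1)))) =
    ((k:ℝ)*(j:ℝ)) / (2*(m:ℝ)*((k:ℝ)+1)) by ring, div_lt_iff₀ hD]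
  nlinarith [Nat.cast_nonneg (α := ℝ) k]

lemma m_dl_le (hm : 0 < m) : (m:ℝ) * dl m k ≤ 1/2 := by
  have h1 : (0:ℝ) < (m:ℝ) := by exact_mod_cast hm
  have hD : (0:ℝ) < 2*(m:ℝ)*((k:ℝ)+1) := by positivity
  rw [dl, show (m:ℝ) * (1 / (2*(m:ℝ)*((k:ℝ)+1))) = (m:ℝ) / (2*(m:ℝ)*((k:ℝ)+1)) by ring,
    div_le_iff₀ hD]
  nlinarith [Nat.cast_nonneg (α := ℝ) k]

lemma c_mono (hm : 0 < m) {j j' : ℕ} (h : j ≤ j') : (j:ℝ) * dl m k ≤ (j':ℝ) * dl m k :=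
  mul_le_mul_of_nonneg_right (by exact_mod_cast h) (le_of_lt (dl_pos hm))

lemma c_lt_gv (hm : 0 < m) {t : ℕ} (ht : t < m) : (t:ℝ) * dl m k < gv m k t := by
  unfold gv
  by_cases h : t = m - 1
  · rw [if_pos h]
    calc (t:ℝ) * dl m k ≤ (m:ℝ) * dl m k := c_mono hm (le_of_lt ht)
    _ ≤ 1/2 := m_dl_le hm
    _ < 1 := by norm_num
  · rw [if_neg h]
    have := dl_pos (m := m) (k := k) hm
    have : (t:ℝ) < (t:ℝ) + 1 := by linarith
    nlinarith [dl_pos (m := m) (k := k) hm]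

lemma gv_le_one (hm : 0 < m) {t : ℕ} (ht : t < m) : gv m k t ≤ 1 := by
  unfold gv
  by_cases h : t = m - 1
  · rw [if_pos h]
  · rw [if_neg h]
    have h2 : t + 1 ≤ m := ht
    calc ((t:ℝ)+1) * dl m k = ((t+1 : ℕ):ℝ) * dl m k := by push_cast; ring
    _ ≤ (m:ℝ) * dl m k := c_mono hm h2
    _ ≤ 1/2 := m_dl_le hm
    _ ≤ 1 := by norm_num

lemma gv_le_c (hm : 0 < m) {t t' : ℕ} (ht' : t' < m) (h : t < t') :
    gv m k t ≤ (t':ℝ) * dl m k := by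
  unfold gv
  have hne : t ≠ m - 1 := by omega
  rw [if_neg hne]
  calc ((t:ℝ)+1) * dl m k = ((t+1 : ℕ):ℝ) * dl m k := by push_cast; ring
  _ ≤ (t':ℝ) * dl m k := c_mono hm (by omega)

lemma c_nonneg (hm : 0 < m) (j : ℕ) : 0 ≤ (j:ℝ) * dl m k :=
  mul_nonneg (Nat.cast_nonneg j) (le_of_lt (dl_pos hm))

end Numeric

section Topol
variable {e m k : ℕ}

lemma isOpen_Creg (t : ℕ) (s : ℤ) : IsOpen (Creg e m k t s) := by
  unfold Creg
  simp only [setOf_and]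
  refine IsOpen.inter (IsOpen.inter ?_ ?_) (IsOpen.inter (IsOpen.inter ?_ ?_)
    (IsOpen.inter (IsOpen.inter ?_ ?_) ?_))
  · exact isOpen_lt continuous_const (continuous_apply 0)
  · exact isOpen_lt (continuous_apply 0) continuous_const
  · exact isOpen_lt continuous_const (continuous_apply 1)
  · exact isOpen_lt (continuous_apply 1) continuous_const
  · exact isOpen_lt continuous_const ((continuous_apply 1).sub
      (continuous_const.mul (continuous_apply 0)))
  · exact isOpen_lt ((continuous_apply 1).sub
      (continuous_const.mul (continuous_apply 0))) continuous_const
  · rw [setOf_forall]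
    refine isOpen_iInter_of_finite fun i => ?_
    by_cases h : 2 ≤ (i:ℕ)
    · simp only [h, true_implies, setOf_and]
      exact (isOpen_lt continuous_const (continuous_apply i)).inter
        (isOpen_lt (continuous_apply i) continuous_const)
    · simp only [h, false_implies, setOf_true]
      exact isOpen_univ

lemma convex_Creg (t : ℕ) (s : ℤ) : Convex ℝ (Creg e m k t s) := by
  have lin0 : IsLinearMap ℝ (fun x : Fin (e+2) → ℝ => x 0) := ⟨fun _ _ => rfl, fun _ _ => rfl⟩
  have lin1 : IsLinearMap ℝ (fun x : Fin (e+2) → ℝ => x 1) := ⟨fun _ _ => rfl, fun _ _ => rfl⟩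
  have lini : ∀ i : Fin (e+2), IsLinearMap ℝ (fun x : Fin (e+2) → ℝ => x i) :=
    fun i => ⟨fun _ _ => rfl, fun _ _ => rfl⟩
  have linsk : IsLinearMap ℝ (fun x : Fin (e+2) → ℝ => x 1 - (k:ℝ) * x 0) := by
    constructor
    · intro a b; simp only [Pi.add_apply]; ring
    · intro c a; simp only [Pi.smul_apply, smul_eq_mul]; ring
  unfold Creg
  simp only [setOf_and]
  refine Convex.inter (Convex.inter ?_ ?_) (Convex.inter (Convex.inter ?_ ?_)
    (Convex.inter (Convex.inter ?_ ?_) ?_))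
  · exact convex_halfSpace_gt lin0 _
  · exact convex_halfSpace_lt lin0 _
  · exact convex_halfSpace_gt lin1 _
  · exact convex_halfSpace_lt lin1 _
  · exact convex_halfSpace_gt linsk _
  · exact convex_halfSpace_lt linsk _
  · rw [setOf_forall]
    refine convex_iInter fun i => ?_
    by_cases h : 2 ≤ (i:ℕ)
    · simp only [h, true_implies, setOf_and]
      exact (convex_halfSpace_gt (lini i) _).inter (convex_halfSpace_lt (lini i) _)
    · simp only [h, false_implies, setOf_true]
      exact convex_univ

end Topol

section Nonempty
variable {e m k : ℕ}

lemma creg_point {t : ℕ} {s : ℤ} (x0 : ℝ) (h1 : (t:ℝ) * dl m k < x0) (h2 : x0 < gv m k t)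
    (hL : (k:ℝ)*x0 + s + 1/2 < 1) (hU : 0 < (k:ℝ)*x0 + s + 3/2) :
    (Creg e m k t s).Nonempty := by
  obtain ⟨L, hLdef⟩ : ∃ v : ℝ, v = (k:ℝ)*x0 + s + 1/2 := ⟨_, rfl⟩
  obtain ⟨U, hUdef⟩ : ∃ v : ℝ, v = (k:ℝ)*x0 + s + 3/2 := ⟨_, rfl⟩
  rw [← hLdef] at hL
  rw [← hUdef] at hU
  have hLU : L < U := by rw [hLdef, hUdef]; linarith
  obtain ⟨mid, hmid⟩ : ∃ v : ℝ, v = (max 0 L + min 1 U)/2 := ⟨_, rfl⟩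
  have hmax : max 0 L < min 1 U := by
    rw [max_lt_iff, lt_min_iff, lt_min_iff]
    exact ⟨⟨one_pos, hU⟩, hL, hLU⟩
  have hmid1 : max 0 L < mid := by rw [hmid]; linarith
  have hmid2 : mid < min 1 U := by rw [hmid]; linarith
  clear hmid
  have hmid0 : 0 < mid := lt_of_le_of_lt (le_max_left 0 L) hmid1
  have hmidlt1 : mid < 1 := lt_of_lt_of_le hmid2 (min_le_left 1 U)
  have hmidL : L < mid := lt_of_le_of_lt (le_max_right 0 L) hmid1
  have hmidU : mid < U := lt_of_lt_of_le hmid2 (min_le_right 1 U)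
  refine ⟨fun i => if i = 0 then x0 else mid, ?_⟩
  have h10 : (1 : Fin (e+2)) ≠ 0 := (fin_zero_ne_one e).symm
  constructor
  · simp only [if_pos rfl]
    exact ⟨h1, h2⟩
  refine ⟨?_, ?_, ?_⟩
  · simp only [if_neg h10]
    exact ⟨hmid0, hmidlt1⟩
  · simp only [if_neg h10, if_pos rfl, if_true, eq_self_iff_true]
    rw [hLdef] at hmidL
    rw [hUdef] at hmidU
    constructor
    · linarith
    · linarith
  · intro i hi
    have hi0 : i ≠ 0 := by
      intro h; rw [h] at hi; simp [Fin.val_zero] at hi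
    simp only [if_neg hi0]
    exact ⟨hmid0, hmidlt1⟩

lemma nonempty_Creg (hm : 0 < m) {t : ℕ} (ht : t < m) {s : ℤ}
    (hs1 : 1 - (cnt m k t : ℤ) ≤ s) (hs0 : s ≤ 0) :
    (Creg e m k t s).Nonempty := by
  have hdl := dl_pos (m := m) (k := k) hm
  have hs0' : (s:ℝ) ≤ 0 := by exact_mod_cast hs0
  by_cases hA : k = 0 ∨ s = 0 ∨ t ≠ m - 1
  · -- case A : x0 := c_t + δ/2
    have hsm1 : -1 ≤ s := by
      rcases hA with h | h | h
      · have : cnt m k t ≤ 2 := by unfold cnt; split <;> omega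
        omega
      · omega
      · have : cnt m k t = 2 := by unfold cnt; rw [if_neg h]
        omega
    have hsm1' : (-1:ℝ) ≤ (s:ℝ) := by exact_mod_cast hsm1
    obtain ⟨x0, hx0⟩ : ∃ v : ℝ, v = (t:ℝ) * dl m k + dl m k / 2 := ⟨_, rfl⟩
    have hx0lt : x0 < ((t:ℝ)+1) * dl m k := by rw [hx0]; nlinarith
    have htm : t + 1 ≤ m := ht
    have hkx0 : (k:ℝ) * x0 < 1/2 := by
      have h1 : (k:ℝ) * x0 ≤ (k:ℝ) * (((t:ℝ)+1) * dl m k) := by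
        apply mul_le_mul_of_nonneg_left (le_of_lt hx0lt) (Nat.cast_nonneg k)
      have h2 := k_c_lt_half (k := k) hm htm
      push_cast at h2
      linarith
    have hkx0' : 0 ≤ (k:ℝ) * x0 := by
      apply mul_nonneg (Nat.cast_nonneg k)
      have := c_nonneg (m := m) (k := k) hm t
      rw [hx0]; linarith
    refine creg_point x0 (by rw [hx0]; linarith) ?_ (by linarith) (by linarith)
    -- x0 < gv
    unfold gv
    by_cases h : t = m - 1
    · rw [if_pos h]
      have h2 : (((t+1:ℕ)):ℝ) * dl m k ≤ (m:ℝ) * dl m k := c_mono hm htm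
      have h3 := m_dl_le (m := m) (k := k) hm
      push_cast at h2
      linarith
    · rw [if_neg h]; exact hx0lt
  · -- case B
    push_neg at hA
    obtain ⟨hk0, hs0ne, htm⟩ := hA
    have hk1 : 1 ≤ k := Nat.pos_of_ne_zero hk0
    have hk1' : (1:ℝ) ≤ (k:ℝ) := by exact_mod_cast hk1
    have hkpos : (0:ℝ) < (k:ℝ) := by linarith
    have hsle : s ≤ -1 := by omega
    have hsle' : (s:ℝ) ≤ -1 := by exact_mod_cast hsle
    have hsge : -(k:ℤ) - 1 ≤ s := by
      have : cnt m k t = k + 2 := by unfold cnt; rw [if_pos htm]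
      omega
    have hsge' : -(k:ℝ) - 1 ≤ (s:ℝ) := by exact_mod_cast hsge
    obtain ⟨w, hw⟩ : ∃ v : ℝ, v = min ((k:ℝ) - 1/4) (-(s:ℝ) - 1/2) := ⟨_, rfl⟩
    have hwhalf : 1/2 ≤ w := by
      rw [hw]; apply le_min <;> linarith
    have hwk : w ≤ (k:ℝ) - 1/4 := hw ▸ min_le_left _ _
    have hws : w ≤ -(s:ℝ) - 1/2 := hw ▸ min_le_right _ _
    have hwlb : -(s:ℝ) - 3/2 < w := by
      rw [hw]; apply lt_min <;> linarith
    obtain ⟨x0, hx0⟩ : ∃ v : ℝ, v = w / k := ⟨_, rfl⟩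
    have hkx0 : (k:ℝ) * x0 = w := by rw [hx0]; field_simp
    have hct : (k:ℝ) * ((t:ℝ) * dl m k) < 1/2 := k_c_lt_half hm (le_of_lt ht)
    refine creg_point x0 ?_ ?_ (by rw [hkx0]; linarith) (by rw [hkx0]; linarith)
    · rw [hx0, lt_div_iff₀ hkpos]; nlinarith
    · rw [hx0]
      unfold gv
      rw [if_pos htm, div_lt_one hkpos]
      linarith

end Nonempty

section Core
variable {e m k : ℕ}

lemma int_not_in_unit {z : ℤ} (h0 : (0:ℝ) < (z:ℝ)) (h1 : (z:ℝ) < 1) : False := by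
  have a : 0 < z := by exact_mod_cast h0
  have b : z < 1 := by exact_mod_cast h1
  omega

lemma int_eq_zero_of {z : ℤ} (h0 : (-1:ℝ) < (z:ℝ)) (h1 : (z:ℝ) < 1) : z = 0 := by
  have a : -1 < z := by exact_mod_cast h0
  have b : z < 1 := by exact_mod_cast h1
  omega

lemma x0_bounds (hm : 0 < m) {t : ℕ} (ht : t < m) {s : ℤ} {x : Fin (e+2) → ℝ}
    (hx : x ∈ Creg e m k t s) : 0 < x 0 ∧ x 0 < 1 := by
  obtain ⟨⟨h00, h01⟩, -⟩ := hx
  constructor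
  · exact lt_of_le_of_lt (c_nonneg hm t) h00
  · exact lt_of_lt_of_le h01 (gv_le_one hm ht)

lemma Creg_subset_compl (hm : 0 < m) {t : ℕ} (ht : t < m) {s : ℤ} {x : Fin (e+2) → ℝ}
    (hx : x ∈ Creg e m k t s) :
    (∀ i : Fin (e+2), i ≠ 0 → torusQuot (e+2) x ∉ Hsub e i) ∧
    torusQuot (e+2) x ∉ Ssub e k ∧
    (∀ j : ℕ, j < m → torusQuot (e+2) x ∉ Vsub e m k j) := by
  obtain ⟨⟨h00, h01⟩, ⟨h10, h11⟩, ⟨hv1, hv2⟩, hrest⟩ := hx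
  have hx0pos : 0 < x 0 := lt_of_le_of_lt (c_nonneg hm t) h00
  have hx0lt1 : x 0 < 1 := lt_of_lt_of_le h01 (gv_le_one hm ht)
  refine ⟨?_, ?_, ?_⟩
  · intro i hi
    rw [mem_Hsub]
    rintro ⟨z, hz⟩
    have hxi : 0 < x i ∧ x i < 1 := by
      rcases Nat.lt_or_ge (i:ℕ) 2 with h2 | h2
      · have hval : (i:ℕ) = 1 := by
          have : (i:ℕ) ≠ 0 := fun h => hi (Fin.ext (by rw [h, Fin.val_zero]))
          omega
        have : i = 1 := Fin.ext (by rw [hval, Fin.val_one])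
        rw [this]; exact ⟨h10, h11⟩
      · exact hrest i h2
    exact int_not_in_unit (hz ▸ hxi.1) (hz ▸ hxi.2)
  · rw [mem_Ssub]
    rintro ⟨z, hz⟩
    have a : (s:ℝ) < (z:ℝ) := by linarith
    have b : (z:ℝ) < (s:ℝ) + 1 := by linarith
    have a' : s < z := by exact_mod_cast a
    have b' : (z:ℝ) < ((s+1 : ℤ):ℝ) := by push_cast; linarith
    have b'' : z < s + 1 := by exact_mod_cast b'
    omega
  · intro j hj
    rw [mem_Vsub]
    rintro ⟨z, hz⟩
    have hcj0 : 0 ≤ (j:ℝ) * dl m k := c_nonneg hm j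
    have hcj1 : (j:ℝ) * dl m k < 1 := by
      have h1 : (j:ℝ) * dl m k ≤ (m:ℝ) * dl m k := c_mono hm (le_of_lt hj)
      have := m_dl_le (m := m) (k := k) hm
      linarith
    have hz0 : z = 0 := int_eq_zero_of (by linarith) (by linarith)
    rw [hz0] at hz
    push_cast at hz
    rw [add_zero] at hz
    rcases Nat.lt_or_ge t j with hlt | hge
    · have := gv_le_c (k := k) hm hj hlt
      linarith
    · have := c_mono (m := m) (k := k) hm hge
      linarith

lemma Creg_disjoint (hm : 0 < m) {t t' : ℕ} (ht : t < m) (ht' : t' < m) {s s' : ℤ}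
    {x x' : Fin (e+2) → ℝ} (hx : x ∈ Creg e m k t s) (hx' : x' ∈ Creg e m k t' s')
    (heq : torusQuot (e+2) x = torusQuot (e+2) x') : t = t' ∧ s = s' := by
  rw [torusQuot_eq_iff] at heq
  have hb := x0_bounds hm ht hx
  have hb' := x0_bounds hm ht' hx'
  obtain ⟨z0, hz0⟩ := heq 0
  have hz00 : z0 = 0 := int_eq_zero_of (by linarith [hb.1, hb.2, hb'.1, hb'.2])
    (by linarith [hb.1, hb.2, hb'.1, hb'.2])
  rw [hz00] at hz0
  push_cast at hz0
  rw [add_zero] at hz0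
  obtain ⟨⟨h00, h01⟩, ⟨h10, h11⟩, ⟨hv1, hv2⟩, -⟩ := hx
  obtain ⟨⟨h00', h01'⟩, ⟨h10', h11'⟩, ⟨hv1', hv2'⟩, -⟩ := hx'
  have htt : t = t' := by
    rcases lt_trichotomy t t' with h | h | h
    · exact absurd (gv_le_c (k := k) hm ht' h) (by push_neg; linarith)
    · exact h
    · exact absurd (gv_le_c (k := k) hm ht h) (by push_neg; linarith)
  obtain ⟨z1, hz1⟩ := heq 1
  have hz10 : z1 = 0 := int_eq_zero_of (by linarith) (by linarith)
  rw [hz10] at hz1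
  push_cast at hz1
  rw [add_zero] at hz1
  refine ⟨htt, ?_⟩
  rw [hz1, hz0] at hv1' hv2'
  have a : (s:ℝ) < (s':ℝ) + 1 := by linarith
  have b : (s':ℝ) < (s:ℝ) + 1 := by linarith
  have a' : (s:ℝ) < ((s'+1 : ℤ):ℝ) := by push_cast; linarith
  have b' : (s':ℝ) < ((s+1 : ℤ):ℝ) := by push_cast; linarith
  have a'' : s < s' + 1 := by exact_mod_cast a'
  have b'' : s' < s + 1 := by exact_mod_cast b'
  omega

end Core

section Cover
variable {e m k : ℕ}

lemma cover_lemma (hm : 0 < m) (ξ : Torus (e+2))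
    (hH : ∀ i : Fin (e+2), i ≠ 0 → ξ ∉ Hsub e i)
    (hS : ξ ∉ Ssub e k)
    (hV : ∀ j : ℕ, j < m → ξ ∉ Vsub e m k j) :
    ∃ t < m, ∃ s : ℤ, 1 - (cnt m k t : ℤ) ≤ s ∧ s ≤ 0 ∧
      ξ ∈ torusQuot (e+2) '' Creg e m k t s := by
  classical
  -- canonical lift into [0,1)
  obtain ⟨x, hxdef⟩ : ∃ x : Fin (e+2) → ℝ,
      x = fun i => ((AddCircle.equivIco (1:ℝ) 0 (ξ i)) : ℝ) := ⟨_, rfl⟩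
  have hxIco : ∀ i, x i ∈ Ico (0:ℝ) 1 := by
    intro i
    have h := (AddCircle.equivIco (1:ℝ) 0 (ξ i)).property
    rw [hxdef]
    exact ⟨h.1, by have := h.2; linarith⟩
  have hξ : torusQuot (e+2) x = ξ := by
    rw [hxdef]
    funext i
    exact (AddCircle.equivIco (1:ℝ) 0).symm_apply_apply (ξ i)
  clear hxdef
  -- coordinates other than 0 lie in (0,1)
  have hne : ∀ i : Fin (e+2), i ≠ 0 → 0 < x i ∧ x i < 1 := by
    intro i hi
    refine ⟨?_, (hxIco i).2⟩
    rcases lt_or_eq_of_le (hxIco i).1 with h | h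
    · exact h
    · exfalso
      exact hH i hi (hξ ▸ (mem_Hsub e i x).mpr ⟨0, by rw [← h]; norm_num⟩)
  have hx1 : 0 < x 1 ∧ x 1 < 1 := hne 1 (fin_zero_ne_one e).symm
  -- x 0 avoids all the c_j
  have hx0V : ∀ j : ℕ, j < m → x 0 ≠ (j:ℝ) * dl m k := by
    intro j hj h
    exact hV j hj (hξ ▸ (mem_Vsub e m k j x).mpr ⟨0, by rw [h]; norm_num⟩)
  have hx0pos : 0 < x 0 := by
    rcases lt_or_eq_of_le (hxIco 0).1 with h | h
    · exact h
    · exact absurd h.symm (by simpa using hx0V 0 hm)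
  -- find the strip t
  obtain ⟨T, hTdef⟩ : ∃ T : Finset ℕ,
      T = (Finset.range m).filter (fun t : ℕ => (t:ℝ) * dl m k < x 0) := ⟨_, rfl⟩
  have h0T : 0 ∈ T := by
    rw [hTdef]
    simp only [Finset.mem_filter, Finset.mem_range]
    exact ⟨hm, by norm_num [hx0pos]⟩
  have hTne : T.Nonempty := ⟨0, h0T⟩
  obtain ⟨t, htdef⟩ : ∃ t, t = T.max' hTne := ⟨_, rfl⟩
  have htT : t ∈ T := htdef ▸ T.max'_mem hTne
  have htT' := htT
  rw [hTdef, Finset.mem_filter, Finset.mem_range] at htT'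
  obtain ⟨htm, htlt⟩ := htT'
  have hgv : x 0 < gv m k t := by
    by_cases h : t = m - 1
    · rw [gv, if_pos h]; exact (hxIco 0).2
    · rw [gv, if_neg h]
      have ht1m : t + 1 < m := by omega
      have hnotin : ¬ ((((t+1:ℕ)):ℝ) * dl m k < x 0) := by
        intro hcon
        have hmem : t + 1 ∈ T := by
          rw [hTdef, Finset.mem_filter, Finset.mem_range]
          exact ⟨ht1m, hcon⟩
        have := T.le_max' _ hmem
        omega
      push_neg at hnotin
      rcases lt_or_eq_of_le hnotin with h' | h'
      · push_cast at h'; exact h'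
      · exact absurd h' (hx0V (t+1) ht1m)
  -- the level s
  have hvne : ∀ z : ℤ, x 1 - (k:ℝ) * x 0 ≠ 1/2 + z := by
    intro z h
    exact hS (hξ ▸ (mem_Ssub e k x).mpr ⟨z, h⟩)
  obtain ⟨s, hsdef⟩ : ∃ s : ℤ, s = ⌊x 1 - (k:ℝ) * x 0 - 1/2⌋ := ⟨_, rfl⟩
  have hfl : (s:ℝ) ≤ x 1 - (k:ℝ) * x 0 - 1/2 := hsdef ▸ Int.floor_le _
  have hfl2 : x 1 - (k:ℝ) * x 0 - 1/2 < s + 1 := hsdef ▸ Int.lt_floor_add_one _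
  have hsne : (s:ℝ) ≠ x 1 - (k:ℝ) * x 0 - 1/2 := by
    intro h
    exact hvne s (by linarith)
  have hs1 : (s:ℝ) + 1/2 < x 1 - (k:ℝ) * x 0 := by
    rcases lt_or_eq_of_le hfl with h | h
    · linarith
    · exact absurd h hsne
  have hs2 : x 1 - (k:ℝ) * x 0 < (s:ℝ) + 3/2 := by linarith
  have hkx0 : 0 ≤ (k:ℝ) * x 0 := mul_nonneg (Nat.cast_nonneg k) (le_of_lt hx0pos)
  have hs0 : s ≤ 0 := by
    have h1 : x 1 - (k:ℝ) * x 0 - 1/2 < 1 := by linarith [hx1.2]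
    have h2 : s < 1 := hsdef ▸ Int.floor_lt.mpr (by push_cast; linarith)
    omega
  refine ⟨t, htm, s, ?_, hs0, ⟨x, ⟨⟨htlt, hgv⟩, hx1, ⟨hs1, hs2⟩, ?_⟩, hξ⟩⟩
  · -- lower bound on s
    by_cases h : t = m - 1
    · rw [cnt, if_pos h]
      have hkx0' : (k:ℝ) * x 0 ≤ (k:ℝ) := by
        nlinarith [(hxIco 0).2, Nat.cast_nonneg (α := ℝ) k]
      have hlow : (-(k:ℝ) - 1 : ℝ) < x 1 - (k:ℝ) * x 0 - 1/2 := by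
        linarith [hx1.1]
      have hlow2 : (((-(k:ℤ) - 1) : ℤ):ℝ) ≤ x 1 - (k:ℝ) * x 0 - 1/2 := by
        push_cast; linarith
      have := hsdef ▸ Int.le_floor.mpr hlow2
      push_cast
      omega
    · rw [cnt, if_neg h]
      have ht1m : t + 1 ≤ m := by omega
      have hc : (k:ℝ) * ((((t+1:ℕ)):ℝ) * dl m k) < 1/2 := k_c_lt_half (k := k) hm ht1m
      have hx0le : x 0 ≤ (((t+1:ℕ)):ℝ) * dl m k := by
        rw [gv, if_neg h] at hgv
        push_cast
        push_cast at hgv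
        linarith
      have hkx0'' : (k:ℝ) * x 0 < 1/2 := by
        calc (k:ℝ) * x 0 ≤ (k:ℝ) * ((((t+1:ℕ)):ℝ) * dl m k) :=
              mul_le_mul_of_nonneg_left hx0le (Nat.cast_nonneg k)
        _ < 1/2 := hc
      have hlow2 : ((-1:ℤ):ℝ) ≤ x 1 - (k:ℝ) * x 0 - 1/2 := by
        push_cast; linarith [hx1.1]
      have := hsdef ▸ Int.le_floor.mpr hlow2
      omega
  · -- remaining coordinates
    intro i hi
    apply hne
    intro hh
    rw [hh] at hi
    simp [Fin.val_zero] at hi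

end Cover

section Distinct
variable {e m k : ℕ}

lemma mem_upd_V (hm : 0 < m) (j : ℕ) (b : ℝ) :
    torusQuot (e+2) (Function.update (fun _ => b) 0 ((j:ℝ) * dl m k)) ∈ Vsub e m k j := by
  rw [mem_Vsub]
  exact ⟨0, by rw [Function.update_self]; norm_num⟩

lemma Hsub_ne_Hsub {i i' : Fin (e+2)} (h : i ≠ i') : Hsub e i ≠ Hsub e i' := by
  intro hcon
  have h1 : torusQuot (e+2) (Function.update (fun _ => (0:ℝ)) i' (1/2)) ∈ Hsub e i := by
    rw [mem_Hsub]
    exact ⟨0, by rw [Function.update_of_ne h]; norm_num⟩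
  rw [hcon, mem_Hsub] at h1
  obtain ⟨z, hz⟩ := h1
  rw [Function.update_self] at hz
  exact int_not_in_unit (by rw [← hz]; norm_num) (by rw [← hz]; norm_num)

lemma Ssub_ne_Hsub (i : Fin (e+2)) : Ssub e k ≠ Hsub e i := by
  intro hcon
  have h1 : torusQuot (e+2) (fun _ => (0:ℝ)) ∈ Hsub e i := by
    rw [mem_Hsub]; exact ⟨0, by norm_num⟩
  rw [← hcon, mem_Ssub] at h1
  obtain ⟨z, hz⟩ := h1
  have hz0 : z = 0 := int_eq_zero_of (by linarith) (by linarith)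
  rw [hz0] at hz
  norm_num at hz

lemma Hsub_ne_Vsub (hm : 0 < m) {i : Fin (e+2)} (hi : i ≠ 0) (j : ℕ) :
    Hsub e i ≠ Vsub e m k j := by
  intro hcon
  have h1 := mem_upd_V (e := e) (k := k) hm j (1/2)
  rw [← hcon, mem_Hsub] at h1
  obtain ⟨z, hz⟩ := h1
  rw [Function.update_of_ne hi] at hz
  exact int_not_in_unit (by rw [← hz]; norm_num) (by rw [← hz]; norm_num)

lemma Ssub_ne_Vsub (hm : 0 < m) {j : ℕ} (hj : j < m) : Ssub e k ≠ Vsub e m k j := by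
  intro hcon
  have h1 := mem_upd_V (e := e) (k := k) hm j 0
  rw [← hcon, mem_Ssub] at h1
  obtain ⟨z, hz⟩ := h1
  have h10 : (1 : Fin (e+2)) ≠ 0 := (fin_zero_ne_one e).symm
  rw [Function.update_of_ne h10, Function.update_self] at hz
  have hc0 : 0 ≤ (k:ℝ) * ((j:ℝ) * dl m k) :=
    mul_nonneg (Nat.cast_nonneg k) (c_nonneg hm j)
  have hc1 : (k:ℝ) * ((j:ℝ) * dl m k) < 1/2 := k_c_lt_half hm (le_of_lt hj)
  have hz0 : z = 0 := int_eq_zero_of (by linarith) (by linarith)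
  rw [hz0] at hz
  norm_num at hz
  linarith

lemma Vsub_ne_Vsub (hm : 0 < m) {j j' : ℕ} (hj : j < m) (hj' : j' < m) (h : j ≠ j') :
    Vsub e m k j ≠ Vsub e m k j' := by
  intro hcon
  have h1 := mem_upd_V (e := e) (k := k) hm j 0
  rw [hcon, mem_Vsub] at h1
  obtain ⟨z, hz⟩ := h1
  rw [Function.update_self] at hz
  have b1 : 0 ≤ (j:ℝ) * dl m k := c_nonneg hm j
  have b2 : 0 ≤ (j':ℝ) * dl m k := c_nonneg hm j'
  have b3 : (j:ℝ) * dl m k ≤ (m:ℝ) * dl m k := c_mono hm (le_of_lt hj)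
  have b4 : (j':ℝ) * dl m k ≤ (m:ℝ) * dl m k := c_mono hm (le_of_lt hj')
  have b5 := m_dl_le (m := m) (k := k) hm
  have hz0 : z = 0 := int_eq_zero_of (by linarith) (by linarith)
  rw [hz0] at hz
  norm_num at hz
  have hdl := dl_pos (m := m) (k := k) hm
  rcases hz with h' | h'
  · exact h (by exact_mod_cast h')
  · linarith

end Distinct

/-- Counting lemma: a disjoint finite open preconnected cover gives the component count. -/
lemma card_components_of_cover {X : Type*} [TopologicalSpace X] {U : Set X} {ι : Type*}
    (V : ι → Set X) (hopen : ∀ t, IsOpen (V t)) (hconn : ∀ t, IsPreconnected (V t))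
    (hne : ∀ t, (V t).Nonempty) (hdisj : ∀ t t', t ≠ t' → Disjoint (V t) (V t'))
    (hcover : U = ⋃ t, V t) :
    Nat.card (ConnectedComponents ↥U) = Nat.card ι := by
  classical
  have hVU : ∀ t, V t ⊆ U := fun t => hcover ▸ subset_iUnion V t
  -- preferred points
  choose p hp using hne
  let g : ι → ↥U := fun t => ⟨p t, hVU t (hp t)⟩
  let f : ι → ConnectedComponents ↥U := fun t => ConnectedComponents.mk (g t)
  -- preimages of the V's within U
  let W : ι → Set ↥U := fun t => Subtype.val ⁻¹' (V t)
  have hWconn : ∀ t, IsPreconnected (W t) := by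
    intro t
    rw [← Topology.IsInducing.subtypeVal.isPreconnected_image]
    have : Subtype.val '' (W t) = V t := by
      rw [Subtype.image_preimage_coe]
      exact inter_eq_self_of_subset_right (hVU t)
    rw [this]; exact hconn t
  have hWclopen : ∀ t, IsClopen (W t) := by
    intro t
    refine ⟨?_, (hopen t).preimage continuous_subtype_val⟩
    -- closed: complement is preimage of union of others
    have : (W t)ᶜ = Subtype.val ⁻¹' (⋃ t' ∈ ({t}ᶜ : Set ι), V t') := by
      ext ⟨x, hx⟩
      simp only [mem_compl_iff, mem_preimage, W, mem_iUnion]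
      constructor
      · intro hxt
        rw [hcover] at hx
        obtain ⟨t', ht'⟩ := mem_iUnion.mp hx
        exact ⟨t', fun h => hxt (h ▸ ht'), ht'⟩
      · rintro ⟨t', ht', hxt'⟩ hxt
        exact (hdisj t' t (fun h => ht' h)).ne_of_mem hxt' hxt rfl
    rw [← isOpen_compl_iff, this]
    exact (isOpen_biUnion (fun t' _ => hopen t')).preimage continuous_subtype_val
  have hinj : Function.Injective f := by
    intro t t' h
    rw [ConnectedComponents.coe_eq_coe] at h
    have h1 : connectedComponent (g t) ⊆ W t :=
      (hWclopen t).connectedComponent_subset (hp t)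
    have h2 : g t' ∈ connectedComponent (g t) := h ▸ mem_connectedComponent
    by_contra hne'
    exact (hdisj t t' hne').ne_of_mem (h1 h2) (hp t') rfl
  have hsurj : Function.Surjective f := by
    intro comp
    obtain ⟨⟨x, hx⟩, rfl⟩ := ConnectedComponents.surjective_coe comp
    have hx' := hx
    rw [hcover] at hx'
    obtain ⟨t, hxt⟩ := mem_iUnion.mp hx'
    refine ⟨t, ?_⟩
    rw [ConnectedComponents.coe_eq_coe]
    apply connectedComponent_eq
    exact (hWconn t).subset_connectedComponent (hp t) hxt
  exact (Nat.card_congr (Equiv.ofBijective f ⟨hinj, hsurj⟩)).symm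

lemma isCodimOne' {d : ℕ} (a : Fin d → ℤ) (i₀ : Fin d) (ha : a i₀ = 1) (c : ℝ) :
    IsCodimOneSubtorus (lineSet d a c) := by
  obtain ⟨aq, h1, h2⟩ := isCodimOneSubtorus_lineSet a i₀ ha c
  exact ⟨aq, c, h1, h2⟩

section Count
variable {m k : ℕ}

lemma card_sigma_cnt (hm : 0 < m) :
    Nat.card (Σ t : Fin m, Fin (cnt m k (t:ℕ))) = k + 2 * m := by
  rw [Nat.card_eq_fintype_card, Fintype.card_sigma]
  simp only [Fintype.card_fin]
  rw [Fin.sum_univ_eq_sum_range (fun t => cnt m k t) m]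
  have hcongr : ∀ t ∈ Finset.range m, cnt m k t = 2 + (if t = m - 1 then k else 0) := by
    intro t _
    unfold cnt
    split <;> omega
  rw [Finset.sum_congr rfl hcongr, Finset.sum_add_distrib, Finset.sum_const,
    Finset.card_range, Finset.sum_ite_eq' (Finset.range m) (m-1) (fun _ => k),
    if_pos (Finset.mem_range.mpr (by omega))]
  simp only [smul_eq_mul]
  omega

end Count

/-- for `n > d`, every integer `l ≥ 2(n - d)` is realizable in `F(T^d, n)`. -/
theorem FTorus_contains_ge_two_n_sub_d (d n l : ℕ) (hd : 2 ≤ d) (hn : d < n)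
    (hl : 2 * (n - d) ≤ l) : l ∈ FTorus d n := by
  classical
  obtain ⟨e, rfl⟩ : ∃ e, d = e + 2 := ⟨d - 2, by omega⟩
  obtain ⟨m, hmdef⟩ : ∃ m, m = n - (e + 2) := ⟨_, rfl⟩
  have hm : 0 < m := by omega
  obtain ⟨k, hk⟩ : ∃ k, l = k + 2 * m := ⟨l - 2 * m, by omega⟩
  set F : Fin (e+2) ⊕ Fin m → Set (Torus (e+2)) := fun u =>
    Sum.rec (fun i => if i = 0 then Ssub e k else Hsub e i)
      (fun j => Vsub e m k (j:ℕ)) u with hF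
  have hFinj : Function.Injective F := by
    rintro (i | j) (i' | j') h
    · by_cases hi : i = 0 <;> by_cases hi' : i' = 0
      · rw [hi, hi']
      · subst hi
        simp only [hF, if_pos rfl, if_neg hi'] at h
        exact absurd h (Ssub_ne_Hsub i')
      · subst hi'
        simp only [hF, if_pos rfl, if_neg hi] at h
        exact absurd h.symm (Ssub_ne_Hsub i)
      · simp only [hF, if_neg hi, if_neg hi'] at h
        by_contra hne
        exact Hsub_ne_Hsub (fun hii => hne (by rw [hii])) h
    · exfalso
      by_cases hi : i = 0
      · subst hi
        simp only [hF, if_pos rfl] at h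
        exact Ssub_ne_Vsub hm j'.isLt h
      · simp only [hF, if_neg hi] at h
        exact Hsub_ne_Vsub hm hi (j':ℕ) h
    · exfalso
      by_cases hi : i' = 0
      · subst hi
        simp only [hF, if_pos rfl] at h
        exact Ssub_ne_Vsub hm j.isLt h.symm
      · simp only [hF, if_neg hi] at h
        exact Hsub_ne_Vsub hm hi (j:ℕ) h.symm
    · simp only [hF] at h
      by_contra hne
      exact Vsub_ne_Vsub hm j.isLt j'.isLt
        (fun hv => hne (by rw [Fin.ext hv])) h
  refine ⟨Finset.image F Finset.univ, ?_, ?_, ?_⟩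
  · rw [Finset.card_image_of_injective _ hFinj, Finset.card_univ, Fintype.card_sum,
      Fintype.card_fin, Fintype.card_fin]
    omega
  · intro S hS
    obtain ⟨u, -, rfl⟩ := Finset.mem_image.mp hS
    rcases u with i | j
    · by_cases hi : i = 0
      · subst hi
        show IsCodimOneSubtorus (if (0 : Fin (e+2)) = 0 then Ssub e k else Hsub e 0)
        rw [if_pos rfl]
        exact isCodimOne' (aS e k) 1 (by simp [aS]) (1/2)
      · show IsCodimOneSubtorus (if i = 0 then Ssub e k else Hsub e i)
        rw [if_neg hi]
        exact isCodimOne' (Pi.single i 1) i (by simp) 0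
    · exact isCodimOne' (Pi.single 0 1) 0 (by simp) _
  · -- the count
    have hA : (⋃ S ∈ Finset.image F Finset.univ, (S : Set (Torus (e+2)))) = ⋃ u, F u := by
      ext ξ
      simp only [Set.mem_iUnion, Finset.mem_image, Finset.mem_coe]
      constructor
      · rintro ⟨S, ⟨u, -, rfl⟩, hξ⟩
        exact ⟨u, hξ⟩
      · rintro ⟨u, hξ⟩
        exact ⟨F u, ⟨u, Finset.mem_univ u, rfl⟩, hξ⟩
    rw [hA]
    unfold torusRegions
    have hcover : (⋃ u, F u)ᶜ =
        ⋃ p : Σ t : Fin m, Fin (cnt m k (t:ℕ)),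
          torusQuot (e+2) '' Creg e m k ((p.1 : ℕ))
            ((p.2 : ℕ) + 1 - (cnt m k (p.1 : ℕ) : ℤ)) := by
      ext ξ
      simp only [mem_compl_iff, mem_iUnion, not_exists]
      constructor
      · intro hξ
        have hH : ∀ i : Fin (e+2), i ≠ 0 → ξ ∉ Hsub e i := by
          intro i hi
          have h2 := hξ (Sum.inl i)
          simpa only [hF, if_neg hi] using h2
        have hS : ξ ∉ Ssub e k := by
          have h2 := hξ (Sum.inl 0)
          simpa only [hF, if_pos rfl] using h2
        have hV : ∀ j : ℕ, j < m → ξ ∉ Vsub e m k j := by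
          intro j hj
          have h2 := hξ (Sum.inr ⟨j, hj⟩)
          simpa only [hF] using h2
        obtain ⟨t, ht, s, hs1, hs0, himg⟩ := cover_lemma hm ξ hH hS hV
        have hlt : (s + (cnt m k t : ℤ) - 1).toNat < cnt m k t := by omega
        have hlev : (((s + (cnt m k t : ℤ) - 1).toNat : ℕ) : ℤ) + 1 - (cnt m k t : ℤ) = s := by
          omega
        refine ⟨⟨⟨t, ht⟩, ⟨(s + (cnt m k t : ℤ) - 1).toNat, hlt⟩⟩, ?_⟩
        show ξ ∈ torusQuot (e+2) '' Creg e m k t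
          ((((s + (cnt m k t : ℤ) - 1).toNat : ℕ) : ℤ) + 1 - (cnt m k t : ℤ))
        rw [hlev]
        exact himg
      · rintro ⟨p, hp⟩ u
        obtain ⟨x, hx, rfl⟩ := hp
        have hcc := Creg_subset_compl hm p.1.isLt hx
        rcases u with i | j
        · by_cases hi : i = 0
          · subst hi
            show torusQuot (e+2) x ∉ (if (0 : Fin (e+2)) = 0 then Ssub e k else Hsub e 0)
            rw [if_pos rfl]
            exact hcc.2.1
          · show torusQuot (e+2) x ∉ (if i = 0 then Ssub e k else Hsub e i)
            rw [if_neg hi]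
            exact hcc.1 i hi
        · exact hcc.2.2 (j:ℕ) j.isLt
    rw [hcover]
    rw [card_components_of_cover
      (fun p : Σ t : Fin m, Fin (cnt m k (t:ℕ)) =>
        torusQuot (e+2) '' Creg e m k ((p.1 : ℕ))
          ((p.2 : ℕ) + 1 - (cnt m k (p.1 : ℕ) : ℤ)))
      (fun p => (isOpenQuotientMap_torusQuot (e+2)).isOpenMap _ (isOpen_Creg _ _))
      (fun p => ((convex_Creg _ _).isPreconnected).image _
        (isOpenQuotientMap_torusQuot (e+2)).continuous.continuousOn)
      (fun p => ((nonempty_Creg hm p.1.isLt (by have h2 := p.2.isLt; omega)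
        (by have h2 := p.2.isLt; omega)).image _))
      ?_ rfl, card_sigma_cnt hm]
    · omega
    · -- disjointness
      rintro ⟨t, sv⟩ ⟨t', sv'⟩ hne
      rw [Set.disjoint_left]
      rintro ξ ⟨x, hx, rfl⟩ ⟨x', hx', heq⟩
      obtain ⟨htt, hss⟩ := Creg_disjoint hm t'.isLt t.isLt hx' hx heq
      apply hne
      have ht : t = t' := Fin.ext htt.symm
      subst ht
      have hss' : ((sv' : ℕ) : ℤ) + 1 - (cnt m k (t:ℕ) : ℤ)
          = ((sv : ℕ) : ℤ) + 1 - (cnt m k (t:ℕ) : ℤ) := hss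
      have : (sv : ℕ) = (sv' : ℕ) := by omega
      rw [Sigma.mk.inj_iff]
      exact ⟨rfl, heq_of_eq (Fin.ext this)⟩
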